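/- arXiv:0904.0071 — 3 statements merged into one kernel-verified Lean document; each statement's English description precedes it below -/
import Mathlib

section
/- In any classical Kripke model, w forces A→B if and only if for all w' ≥ w, if w' forces A then w' forces B. -/
/-- Formulas of predicate logic (higher-order abstract syntax over a
type `C` of constants/domain elements). -/
inductive Formula (C : Type) : Type where
  | atom : ℕ → List C → Formula C
  | top : Formula C
  | bot : Formula C
  | and : Formula C → Formula C → Formula C
  | or : Formula C → Formula C → Formula C
  | imp : Formula C → Formula C → Formula C
  | all : (C → Formula C) → Formula C
  | ex : (C → Formula C) → Formula C

/-- The data of a classical Kripke model: possible worlds, ordering,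
domain function, strong refutation on atomic sentences, exploding predicate. -/
structure CKPre (C : Type) where
  K : Type
  le : K → K → Prop
  D : K → Set C
  srefAtom : K → ℕ → List C → Prop
  expl : K → Prop

namespace CKPre

variable {C : Type}

/-- Orthogonality: every greater world satisfying `S` is exploding. -/
def orth (M : CKPre C) (S : M.K → Prop) (w : M.K) : Prop :=
  ∀ w', M.le w w' → S w' → M.expl w'

/-- Strong refutation, extended from atomic to composite sentences;
(non-strong) forcing and refutation are expressed via `orth`. -/
def sref (M : CKPre C) : Formula C → M.K → Prop
  | .atom p args, w => M.srefAtom w p args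
  | .bot, _ => True
  | .top, _ => False
  | .and A B, w => M.orth (M.orth (M.sref A)) w ∨ M.orth (M.orth (M.sref B)) w
  | .or A B, w => M.orth (M.orth (M.sref A)) w ∧ M.orth (M.orth (M.sref B)) w
  | .imp A B, w => M.orth (M.sref A) w ∧ M.orth (M.orth (M.sref B)) w
  | .all A, w => ∃ d ∈ M.D w, M.orth (M.orth (M.sref (A d))) w
  | .ex A, w => ∀ w', M.le w w' → ∀ d ∈ M.D w', M.orth (M.orth (M.sref (A d))) w'

/-- `w` forces `A`: every `w' ≥ w` strongly refuting `A` is exploding. -/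
def force (M : CKPre C) (A : Formula C) : M.K → Prop := M.orth (M.sref A)

/-- `w` refutes `A`: every `w' ≥ w` forcing `A` is exploding. -/
def refute (M : CKPre C) (A : Formula C) : M.K → Prop := M.orth (M.force A)

end CKPre

/-- A classical Kripke model: the data together with the required properties
(inhabited poset of worlds, monotone domain, monotone strong refutation
on atoms with arguments in the domain, monotone exploding predicate). -/
structure CKModel (C : Type) where
  pre : CKPre C
  le_refl : ∀ w, pre.le w w
  le_trans : ∀ w₁ w₂ w₃, pre.le w₁ w₂ → pre.le w₂ w₃ → pre.le w₁ w₃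
  le_antisymm : ∀ w₁ w₂, pre.le w₁ w₂ → pre.le w₂ w₁ → w₁ = w₂
  nonempty : Nonempty pre.K
  D_mono : ∀ w w', pre.le w w' → pre.D w ⊆ pre.D w'
  srefAtom_dom : ∀ w p args, pre.srefAtom w p args → ∀ d ∈ args, d ∈ pre.D w
  srefAtom_mono : ∀ w w' p args, pre.le w w' → pre.srefAtom w p args → pre.srefAtom w' p args
  expl_mono : ∀ w w', pre.le w w' → pre.expl w → pre.expl w'

/-- Negation ¬A := A → ⊥. -/
def Formula.neg {C : Type} (A : Formula C) : Formula C := Formula.imp A Formula.bot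


lemma orth_mono {C : Type} (M : CKModel C) (S : M.pre.K → Prop) {w w' : M.pre.K}
    (h : M.pre.le w w') (hw : M.pre.orth S w) : M.pre.orth S w' :=
  fun w'' h'' => hw w'' (M.le_trans _ _ _ h h'')

lemma sref_mono {C : Type} (M : CKModel C) (A : Formula C) :
    ∀ w w', M.pre.le w w' → M.pre.sref A w → M.pre.sref A w' := by
  induction A with
  | atom p args => exact fun w w' h hs => M.srefAtom_mono w w' p args h hs
  | top => exact fun _ _ _ h => h
  | bot => exact fun _ _ _ h => h
  | and A B ihA ihB =>
      intro w w' h hs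
      rcases hs with hs | hs
      · exact Or.inl (orth_mono M _ h hs)
      · exact Or.inr (orth_mono M _ h hs)
  | or A B ihA ihB =>
      exact fun w w' h hs => ⟨orth_mono M _ h hs.1, orth_mono M _ h hs.2⟩
  | imp A B ihA ihB =>
      exact fun w w' h hs => ⟨orth_mono M _ h hs.1, orth_mono M _ h hs.2⟩
  | all A ih =>
      intro w w' h hs
      obtain ⟨d, hd, ho⟩ := hs
      exact ⟨d, M.D_mono w w' h hd, orth_mono M _ h ho⟩
  | ex A ih =>
      intro w w' h hs
      exact fun w'' h'' => hs w'' (M.le_trans _ _ _ h h'')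

/-- `w` forces `A → B` iff for all `w' ≥ w`, `w'` forcing `A`
implies `w'` forcing `B`. -/
theorem force_imp_iff {C : Type} (M : CKModel C) (A B : Formula C) (w : M.pre.K) :
    M.pre.force (Formula.imp A B) w ↔
      ∀ w', M.pre.le w w' → M.pre.force A w' → M.pre.force B w' := by
  constructor
  · intro hF w' hle hA w'' hle'' hsB
    exact hF w'' (M.le_trans _ _ _ hle hle'')
      ⟨orth_mono M _ hle'' hA,
       fun w3 h3 hFB => hFB w3 (M.le_refl w3) (sref_mono M B _ _ h3 hsB)⟩
  · intro h w' hle hs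
    exact hs.2 w' (M.le_refl w') (h w' hle hs.1)
end

section
/- In any classical Kripke model, w refutes ∃x.A(x) if and only if w strongly refutes ∃x.A(x) (i.e., for all w' ≥ w and d ∈ D(w'), w' refutes A(d)). -/
/-- refutation of an existential is equivalent to its strong
refutation, i.e. to refuting all instances in all future worlds. -/
theorem refute_ex_iff_sref {C : Type} (M : CKModel C) (A : C → Formula C) (w : M.pre.K) :
    M.pre.refute (Formula.ex A) w ↔ M.pre.sref (Formula.ex A) w := by
  constructor
  · intro h w1 hw1 d hd w2 hw2 hforce
    -- hforce : orth (sref (A d)) w2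
    apply h w2 (M.le_trans _ _ _ hw1 hw2)
    -- need force (ex A) w2 : orth (sref (ex A)) w2
    intro w3 hw3 hsref
    -- hsref : sref (ex A) w3
    have hd3 : d ∈ M.pre.D w3 := M.D_mono _ _ (M.le_trans _ _ _ hw2 hw3) hd
    have := hsref w3 (M.le_refl w3) d hd3
    apply this w3 (M.le_refl w3)
    -- need orth (sref (A d)) w3, from hforce via monotonicity
    intro w4 hw4 hs
    exact hforce w4 (M.le_trans _ _ _ hw3 hw4) hs
  · intro h w1 hw1 hforce
    -- hforce : orth (sref (ex A)) w1; sref (ex A) is monotone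
    apply hforce w1 (M.le_refl w1)
    intro w2 hw2 d hd
    exact h w2 (M.le_trans _ _ _ hw1 hw2) d hd
end

section
/- Peirce's law is forced in every classical Kripke model: for all worlds w and sentences A, B, w forces ((A→B)→A)→A. -/
/-- Peirce's law `((A→B)→A)→A` is forced in every world of
every classical Kripke model. -/
theorem peirce_forced {C : Type} (M : CKModel C) (A B : Formula C) (w : M.pre.K) :
    M.pre.force
      (Formula.imp (Formula.imp (Formula.imp A B) A) A) w := by
  intro w' hww' hs
  obtain ⟨h1, h2⟩ := hs
  apply h1 w' (M.le_refl w')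
  refine ⟨?_, h2⟩
  intro v hv hsab
  exact h2 v hv hsab.1
end
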